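/- Coercivity for the p=2 system: if 1 < q < 2 < α+β and there is a constant C ≥ 0 with λ(∫_Ω a|u|^q + ∫_Ω a|v|^q) ≤ C‖(u,v)‖_H^q for all (u,v), then on the Nehari manifold J_λ(u,v) ≥ ((α+β-2)/(2(α+β)))‖(u,v)‖²_H - ((α+β-q)/(q(α+β)))C‖(u,v)‖_H^q; in particular J_λ is coercive and bounded below on M_λ(Ω). -/

import Mathlib

open MeasureTheory Real

lemma aux_key (c D q : ℝ) (hc : 0 < c) (hD : 0 ≤ D) (hq : 0 < q) (hq2 : q < 2) :
    ∃ E : ℝ, 0 ≤ E ∧ ∀ t : ℝ, 0 ≤ t →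
      c / 2 * t ^ (2 : ℝ) - E ≤ c * t ^ (2 : ℝ) - D * t ^ q := by
  set s : ℝ := max 1 ((2 * (D + 1) / c) ^ ((1 : ℝ) / (2 - q))) with hs
  have hs1 : (1 : ℝ) ≤ s := le_max_left _ _
  have hs0 : (0 : ℝ) < s := lt_of_lt_of_le one_pos hs1
  refine ⟨D * s ^ q, by positivity, fun t ht0 => ?_⟩
  have main : D * t ^ q ≤ c / 2 * t ^ (2 : ℝ) + D * s ^ q := by
    by_cases hts : t ≤ s
    · have h1 : t ^ q ≤ s ^ q := Real.rpow_le_rpow ht0 hts hq.le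
      have h2 : (0 : ℝ) ≤ c / 2 * t ^ (2 : ℝ) := by positivity
      nlinarith [mul_le_mul_of_nonneg_left h1 hD]
    · push_neg at hts
      have ht0' : 0 < t := hs0.trans hts
      have heq : t ^ q = t ^ (q - 2) * t ^ (2 : ℝ) := by
        rw [← Real.rpow_add ht0']; ring_nf
      have h1 : t ^ (q - 2) ≤ s ^ (q - 2) :=
        Real.rpow_le_rpow_of_nonpos hs0 hts.le (by linarith)
      have ha0 : (0 : ℝ) < 2 * (D + 1) / c := by positivity
      have h2 : s ^ (q - 2) ≤ c / (2 * (D + 1)) := by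
        have hle : (2 * (D + 1) / c) ^ ((1 : ℝ) / (2 - q)) ≤ s := le_max_right _ _
        have hpos : (0 : ℝ) < (2 * (D + 1) / c) ^ ((1 : ℝ) / (2 - q)) := by positivity
        have h3 : s ^ (q - 2) ≤ ((2 * (D + 1) / c) ^ ((1 : ℝ) / (2 - q))) ^ (q - 2) :=
          Real.rpow_le_rpow_of_nonpos hpos hle (by linarith)
        have h4 : ((2 * (D + 1) / c) ^ ((1 : ℝ) / (2 - q))) ^ (q - 2)
            = (2 * (D + 1) / c) ^ (-1 : ℝ) := by
          rw [← Real.rpow_mul ha0.le]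
          have hne : (2:ℝ) - q ≠ 0 := by intro h; nlinarith
          have he : 1 / (2 - q) * (q - 2) = (-1 : ℝ) := by field_simp; ring
          rw [he]
        rw [h4, Real.rpow_neg_one] at h3
        calc s ^ (q - 2) ≤ (2 * (D + 1) / c)⁻¹ := h3
        _ = c / (2 * (D + 1)) := by field_simp
      have h5 : D * t ^ (q - 2) ≤ c / 2 := by
        have hD1 : (0:ℝ) < 2 * (D + 1) := by positivity
        have e1 : D * t ^ (q - 2) ≤ D * (c / (2 * (D + 1))) :=
          mul_le_mul_of_nonneg_left (h1.trans h2) hD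
        refine e1.trans ?_
        rw [mul_div_assoc', div_le_div_iff₀ hD1 two_pos]
        nlinarith
      have h6 : 0 ≤ D * s ^ q := by positivity
      have h7 : D * (t ^ (q - 2) * t ^ (2 : ℝ)) ≤ c / 2 * t ^ (2 : ℝ) := by
        rw [← mul_assoc]
        exact mul_le_mul_of_nonneg_right h5 (by positivity)
      rw [heq]; linarith
  linarith

open MeasureTheory Real

/-- `‖(u,v)‖²_H = ∫_Ω |∇u|² + ∫_Ω |∇v|²` on `H = H₀¹(Ω) × H₀¹(Ω)`. -/
noncomputable def normH2 {N : ℕ} (Ω : Set (EuclideanSpace ℝ (Fin N)))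
    (u v : EuclideanSpace ℝ (Fin N) → ℝ) : ℝ :=
  (∫ x in Ω, ‖gradient u x‖ ^ (2 : ℝ)) + ∫ x in Ω, ‖gradient v x‖ ^ (2 : ℝ)

/-- `∫_Ω a|u|^q + ∫_Ω a|v|^q`. -/
noncomputable def aTerm {N : ℕ} (Ω : Set (EuclideanSpace ℝ (Fin N))) (q : ℝ)
    (a u v : EuclideanSpace ℝ (Fin N) → ℝ) : ℝ :=
  (∫ x in Ω, a x * |u x| ^ q) + ∫ x in Ω, a x * |v x| ^ q

/-- `∫_Ω b|u|^α|v|^β`. -/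
noncomputable def bTerm {N : ℕ} (Ω : Set (EuclideanSpace ℝ (Fin N))) (α β : ℝ)
    (b u v : EuclideanSpace ℝ (Fin N) → ℝ) : ℝ :=
  ∫ x in Ω, b x * |u x| ^ α * |v x| ^ β

/-- The energy functional `J_λ` for the `p = 2` system `(E_λ)`. -/
noncomputable def J2 {N : ℕ} (Ω : Set (EuclideanSpace ℝ (Fin N))) (q α β lam : ℝ)
    (a b u v : EuclideanSpace ℝ (Fin N) → ℝ) : ℝ :=
  (1 / 2) * normH2 Ω u v - (lam / q) * aTerm Ω q a u v - (1 / (α + β)) * bTerm Ω α β b u v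

/-- coercivity for the `p = 2` system.  If `1 < q < 2 < α+β` and
`λ(∫_Ω a|u|^q + ∫_Ω a|v|^q) ≤ C‖(u,v)‖_H^q` for all `(u,v)` (with `C ≥ 0`), then on the
Nehari manifold `J_λ(u,v) ≥ ((α+β-2)/(2(α+β)))‖(u,v)‖²_H - ((α+β-q)/(q(α+β)))C‖(u,v)‖_H^q`;
in particular `J_λ` is bounded below and coercive on `M_λ(Ω)`. -/
theorem stmt_13 {N : ℕ} (Ω : Set (EuclideanSpace ℝ (Fin N)))
    (hΩ : Bornology.IsBounded Ω)
    (q α β lam C : ℝ) (a b : EuclideanSpace ℝ (Fin N) → ℝ)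
    (ha : ContinuousOn a (closure Ω)) (hb : ContinuousOn b (closure Ω))
    (hq : 1 < q) (hq2 : q < 2) (hαβ : 2 < α + β) (hC : 0 ≤ C)
    (hbound : ∀ u v : EuclideanSpace ℝ (Fin N) → ℝ,
      lam * aTerm Ω q a u v ≤ C * (normH2 Ω u v ^ ((1 : ℝ) / 2)) ^ q) :
    (∀ u v : EuclideanSpace ℝ (Fin N) → ℝ,
        normH2 Ω u v = lam * aTerm Ω q a u v + bTerm Ω α β b u v →
        J2 Ω q α β lam a b u v
          ≥ ((α + β - 2) / (2 * (α + β))) * normH2 Ω u v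
            - ((α + β - q) / (q * (α + β))) * C * (normH2 Ω u v ^ ((1 : ℝ) / 2)) ^ q) ∧
    (∃ M : ℝ, ∀ u v : EuclideanSpace ℝ (Fin N) → ℝ,
        normH2 Ω u v = lam * aTerm Ω q a u v + bTerm Ω α β b u v →
        M ≤ J2 Ω q α β lam a b u v) ∧
    (∀ K : ℝ, ∃ R : ℝ, ∀ u v : EuclideanSpace ℝ (Fin N) → ℝ,
        normH2 Ω u v = lam * aTerm Ω q a u v + bTerm Ω α β b u v →
        R ≤ normH2 Ω u v ^ ((1 : ℝ) / 2) →
        K ≤ J2 Ω q α β lam a b u v) := by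
  have hq0 : (0:ℝ) < q := by linarith
  have hab0 : (0:ℝ) < α + β := by linarith
  set c1 : ℝ := (α + β - 2) / (2 * (α + β)) with hc1def
  set c2 : ℝ := (α + β - q) / (q * (α + β)) with hc2def
  have hc1 : 0 < c1 := div_pos (by linarith) (by linarith)
  have hc2 : 0 < c2 := div_pos (by linarith) (by positivity)
  have part1 : ∀ u v : EuclideanSpace ℝ (Fin N) → ℝ,
      normH2 Ω u v = lam * aTerm Ω q a u v + bTerm Ω α β b u v →
      J2 Ω q α β lam a b u v
        ≥ c1 * normH2 Ω u v - c2 * C * (normH2 Ω u v ^ ((1 : ℝ) / 2)) ^ q := by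
    intro u v h
    have hB : bTerm Ω α β b u v = normH2 Ω u v - lam * aTerm Ω q a u v := by linarith
    rw [J2, hB]
    have key : (1 / 2) * normH2 Ω u v - (lam / q) * aTerm Ω q a u v
        - (1 / (α + β)) * (normH2 Ω u v - lam * aTerm Ω q a u v)
        = c1 * normH2 Ω u v - c2 * (lam * aTerm Ω q a u v) := by
      rw [hc1def, hc2def]
      field_simp
      ring
    rw [key]
    have h1 := mul_le_mul_of_nonneg_left (hbound u v) hc2.le
    nlinarith
  have hn : ∀ u v : EuclideanSpace ℝ (Fin N) → ℝ, 0 ≤ normH2 Ω u v := fun u v =>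
    add_nonneg (integral_nonneg fun x => Real.rpow_nonneg (norm_nonneg _) _)
      (integral_nonneg fun x => Real.rpow_nonneg (norm_nonneg _) _)
  have hT2 : ∀ u v : EuclideanSpace ℝ (Fin N) → ℝ,
      (normH2 Ω u v ^ ((1 : ℝ) / 2)) ^ (2 : ℝ) = normH2 Ω u v := by
    intro u v
    rw [← Real.rpow_mul (hn u v)]
    norm_num
  obtain ⟨E, hE0, hkey⟩ := aux_key c1 (c2 * C) q hc1 (mul_nonneg hc2.le hC) hq0 hq2
  have part1' : ∀ u v : EuclideanSpace ℝ (Fin N) → ℝ,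
      normH2 Ω u v = lam * aTerm Ω q a u v + bTerm Ω α β b u v →
      c1 / 2 * (normH2 Ω u v ^ ((1 : ℝ) / 2)) ^ (2 : ℝ) - E ≤ J2 Ω q α β lam a b u v := by
    intro u v h
    have h1 := part1 u v h
    have h2 := hkey (normH2 Ω u v ^ ((1 : ℝ) / 2)) (Real.rpow_nonneg (hn u v) _)
    rw [hT2 u v] at h2 ⊢
    nlinarith
  refine ⟨part1, ⟨-E, fun u v h => ?_⟩, fun K => ?_⟩
  · have h1 := part1' u v h
    have h2 : 0 ≤ c1 / 2 * (normH2 Ω u v ^ ((1 : ℝ) / 2)) ^ (2 : ℝ) :=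
      mul_nonneg (by linarith) (Real.rpow_nonneg (Real.rpow_nonneg (hn u v) _) _)
    linarith
  · refine ⟨Real.sqrt (max 0 (2 * (K + E) / c1)), fun u v h hR => ?_⟩
    have h1 := part1' u v h
    have hRn : 0 ≤ Real.sqrt (max 0 (2 * (K + E) / c1)) := Real.sqrt_nonneg _
    have h2 : Real.sqrt (max 0 (2 * (K + E) / c1)) ^ (2 : ℝ)
        ≤ (normH2 Ω u v ^ ((1 : ℝ) / 2)) ^ (2 : ℝ) :=
      Real.rpow_le_rpow hRn hR (by norm_num)
    have h3 : Real.sqrt (max 0 (2 * (K + E) / c1)) ^ (2 : ℝ) = max 0 (2 * (K + E) / c1) := by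
      rw [show (2:ℝ) = ((2:ℕ):ℝ) by norm_num, Real.rpow_natCast, Real.sq_sqrt (le_max_left _ _)]
    rw [h3] at h2
    have h4 : 2 * (K + E) / c1 ≤ max 0 (2 * (K + E) / c1) := le_max_right _ _
    have h5 : c1 / 2 * (2 * (K + E) / c1) ≤ c1 / 2 * (normH2 Ω u v ^ ((1 : ℝ) / 2)) ^ (2 : ℝ) :=
      mul_le_mul_of_nonneg_left (h4.trans h2) (by linarith)
    have h6 : c1 / 2 * (2 * (K + E) / c1) = K + E := by field_simp
    linarith
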